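/- Let r : ℤ → LaurentPolynomial ℤ be defined by r n = (T - 2 + T⁻¹) * (T^n + T^(-n)) + (T^2 - 4*T + 5 - 4*T⁻¹ + T^(-2)). Then for all integers n and m, r n = r m if and only if n = m or n = -m. -/

import Mathlib

open LaurentPolynomial

lemma aux_key (n m : ℤ) (h : (T n + T (-n) : LaurentPolynomial ℤ) = T m + T (-m)) :
    n = m ∨ n = -m := by
  by_contra hc
  push_neg at hc
  obtain ⟨h1, h2⟩ := hc
  have := Finsupp.ext_iff.mp (congrArg AddMonoidAlgebra.coeff h) n
  rw [AddMonoidAlgebra.coeff_add, AddMonoidAlgebra.coeff_add] at this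
  rw [show (T n : LaurentPolynomial ℤ).coeff = Finsupp.single n 1 from rfl,
    show (T (-n) : LaurentPolynomial ℤ).coeff = Finsupp.single (-n) 1 from rfl,
    show (T m : LaurentPolynomial ℤ).coeff = Finsupp.single m 1 from rfl,
    show (T (-m) : LaurentPolynomial ℤ).coeff = Finsupp.single (-m) 1 from rfl,
    Finsupp.add_apply, Finsupp.add_apply, Finsupp.single_apply, Finsupp.single_apply,
    Finsupp.single_apply, Finsupp.single_apply] at this
  split_ifs at this <;> omega

lemma aux_ne : (T 1 - 2 + T (-1) : LaurentPolynomial ℤ) ≠ 0 := by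
  intro h
  have h' : (T 1 + T (-1) : LaurentPolynomial ℤ) = T 0 + T (-0) := by
    rw [neg_zero, T_zero]; linear_combination h
  rcases aux_key 1 0 h' with h4 | h4 <;> omega

/-- The family of Alexander polynomials
`r n = (T - 2 + T⁻¹) * (T^n + T^(-n)) + (T^2 - 4T + 5 - 4T⁻¹ + T^(-2))`
in `ℤ[T, T⁻¹]` satisfies `r n = r m ↔ n = m ∨ n = -m`. -/
theorem stmt_3 (r : ℤ → LaurentPolynomial ℤ)
    (hr : ∀ n : ℤ, r n = (T 1 - 2 + T (-1)) * (T n + T (-n))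
      + (T 2 - 4 * T 1 + 5 - 4 * T (-1) + T (-2))) :
    ∀ n m : ℤ, r n = r m ↔ (n = m ∨ n = -m) := by
  intro n m
  constructor
  · intro h
    rw [hr n, hr m] at h
    have h3 : (T 1 - 2 + T (-1) : LaurentPolynomial ℤ) * ((T n + T (-n)) - (T m + T (-m))) = 0 := by
      ring_nf
      ring_nf at h
      linear_combination h
    rcases mul_eq_zero.mp h3 with h4 | h4
    · exact absurd h4 aux_ne
    · exact aux_key n m (by linear_combination h4)
  · rintro (rfl | rfl)
    · rfl
    · rw [hr, hr, neg_neg, add_comm (T (-m)) (T m)]
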